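/- Let J be a finite group, H a normal subgroup with J/H abelian of order n², and let θ : H → ℂˣ be a J-invariant character such that the alternating pairing k_θ(xH,yH) = θ([x,y]) on J/H is non-degenerate (its radical is trivial). Then there exists a unique irreducible complex representation η of J (up to isomorphism) whose restriction to H contains θ; moreover dim η = n and the restriction of η to H is θ-isotypic. -/

import Mathlib

open CategoryTheory
open scoped Classical

noncomputable section

namespace StoneVonNeumannAux

section Bridge

variable {k : Type} [Field k] {G : Type} [Monoid G]

/-- Restriction of a representation to an invariant subspace. -/
def subrep (Y : FDRep k G) (U : Submodule k Y)
    (hU : ∀ g : G, ∀ u ∈ U, Y.ρ g u ∈ U) : Representation k G U where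
  toFun g := (Y.ρ g).restrict (fun x hx => hU g x hx)
  map_one' := by ext x; simp [LinearMap.restrict_apply]
  map_mul' g h := by ext x; simp [LinearMap.restrict_apply]

lemma hom_comm {Y W : FDRep k G} (f : Y ⟶ W) (g : G) (y : Y) :
    f.hom (Y.ρ g y) = W.ρ g (f.hom y) := by
  have := f.comm g
  exact congrFun (congrArg (fun (p : Y.V ⟶ W.V) => (p : Y → W)) this) y

/-- A nonzero representation with no nontrivial invariant subspaces is simple
as an object of `FDRep k G`. -/
lemma simple_of_invariant (W : FDRep k G)
    (h0 : ∃ w : W, w ≠ 0)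
    (hs : ∀ U : Submodule k W, (∀ g : G, ∀ u ∈ U, W.ρ g u ∈ U) → U = ⊥ ∨ U = ⊤) :
    Simple W := by
  constructor
  intro Y f hm
  constructor
  · intro hiso h0f
    obtain ⟨w, hw⟩ := h0
    apply hw
    have h2 : (inv f ≫ f) = 𝟙 W := IsIso.inv_hom_id f
    have h1 : f.hom ((inv f).hom w) = w :=
      congrFun (congrArg (fun (p : W ⟶ W) => (p.hom : W → W)) h2) w
    have h3 : f.hom = 0 := by rw [h0f]; rfl
    rw [h3] at h1
    exact h1.symm
  · intro hf
    set K : Submodule k Y := LinearMap.ker f.hom.hom.hom with hK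
    have hKinv : ∀ g : G, ∀ u ∈ K, Y.ρ g u ∈ K := by
      intro g u hu
      simp only [hK, LinearMap.mem_ker] at hu ⊢
      show f.hom (Y.ρ g u) = 0
      rw [hom_comm f g u]
      show W.ρ g (f.hom u) = 0
      rw [show f.hom u = 0 from hu, map_zero]
    let KR : FDRep k G := FDRep.of (subrep Y K hKinv)
    let ι : KR ⟶ Y := ⟨ObjectProperty.homMk (ModuleCat.ofHom (K.subtype : (↥K) →ₗ[k] Y)), by intro g; ext x; rfl⟩
    have hι : ι ≫ f = 0 := by
      ext x
      show f.hom (K.subtype x) = 0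
      exact x.2
    have hι0 : ι = 0 := by rw [← cancel_mono f, hι]; simp
    have hinj : Function.Injective f.hom.hom.hom := by
      rw [← LinearMap.ker_eq_bot, ← hK, Submodule.eq_bot_iff]
      intro x hx
      have h4 := congrFun (congrArg (fun (p : KR ⟶ Y) => (p.hom : K → Y)) hι0) ⟨x, hx⟩
      exact h4
    have hsurj : Function.Surjective f.hom.hom.hom := by
      have hRinv : ∀ g : G, ∀ u ∈ LinearMap.range f.hom.hom.hom,
          W.ρ g u ∈ LinearMap.range f.hom.hom.hom := by
        rintro g u ⟨y, rfl⟩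
        exact ⟨Y.ρ g y, hom_comm f g y⟩
      rcases hs _ hRinv with hbot | htop
      · exfalso; apply hf
        ext y
        show f.hom y = 0
        have : f.hom y ∈ LinearMap.range f.hom.hom.hom := ⟨y, rfl⟩
        rw [hbot] at this
        simpa using this
      · rw [← LinearMap.range_eq_top, htop]
    let e : Y ≃ₗ[k] W := LinearEquiv.ofBijective f.hom.hom.hom ⟨hinj, hsurj⟩
    have he : ∀ y : Y, e y = f.hom y := fun _ => rfl
    let ginv : W ⟶ Y := ⟨ObjectProperty.homMk (ModuleCat.ofHom (e.symm.toLinearMap : W →ₗ[k] Y)), by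
      intro g
      ext w
      show e.symm (W.ρ g w) = Y.ρ g (e.symm w)
      apply hinj
      show f.hom _ = f.hom _
      rw [hom_comm f g (e.symm w), ← he, ← he, e.apply_symm_apply, e.apply_symm_apply]⟩
    refine ⟨⟨ginv, ?_, ?_⟩⟩
    · ext y
      show e.symm (f.hom y) = y
      rw [← he, e.symm_apply_apply]
    · ext w
      show f.hom (e.symm w) = w
      rw [← he, e.apply_symm_apply]

end Bridge

section GroupAlgebra

variable {J : Type} [Group J]

/-- The representation attached to a module over the monoid algebra. -/
def repOfAlgModule (M : Type) [AddCommGroup M] [Module ℂ M]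
    [Module (MonoidAlgebra ℂ J) M] [IsScalarTower ℂ (MonoidAlgebra ℂ J) M] :
    Representation ℂ J M where
  toFun g :=
    { toFun := fun v => (MonoidAlgebra.single g (1:ℂ)) • v
      map_add' := fun a b => smul_add _ a b
      map_smul' := fun c v => smul_comm _ c v }
  map_one' := by
    ext v
    show (MonoidAlgebra.single (1:J) (1:ℂ)) • v = v
    rw [← MonoidAlgebra.one_def, one_smul]
  map_mul' g h := by
    ext v
    show (MonoidAlgebra.single (g*h) (1:ℂ)) • v = _
    have : MonoidAlgebra.single (g*h) (1:ℂ)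
        = MonoidAlgebra.single g 1 * MonoidAlgebra.single h 1 := by
      rw [MonoidAlgebra.single_mul_single, one_mul]
    rw [this, mul_smul]
    rfl

lemma repOfAlgModule_apply (M : Type) [AddCommGroup M] [Module ℂ M]
    [Module (MonoidAlgebra ℂ J) M] [IsScalarTower ℂ (MonoidAlgebra ℂ J) M] (g : J) (v : M) :
    repOfAlgModule M g v = (MonoidAlgebra.single g (1:ℂ)) • v := by
  simp [repOfAlgModule]

/-- Clifford-type lemma: in a representation with trivial invariant-subspace lattice,
if some nonzero vector is a `θ`-eigenvector for `H`, all vectors are. -/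
lemma clifford (H : Subgroup J) [H.Normal] (θ : H →* ℂˣ)
    (hinv : ∀ (j : J) (h h' : H), j * (h : J) * j⁻¹ = (h' : J) → θ h' = θ h)
    (W : FDRep ℂ J)
    (hs : ∀ U : Submodule ℂ W, (∀ g : J, ∀ u ∈ U, W.ρ g u ∈ U) → U = ⊥ ∨ U = ⊤)
    (hw : ∃ w : W, w ≠ 0 ∧ ∀ h : H, W.ρ (h : J) w = ((θ h : ℂˣ) : ℂ) • w) :
    ∀ (h : H) (v : W), W.ρ (h : J) v = ((θ h : ℂˣ) : ℂ) • v := by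
  obtain ⟨w, hw0, hweig⟩ := hw
  let U : Submodule ℂ W :=
    { carrier := {v | ∀ h : H, W.ρ (h : J) v = ((θ h : ℂˣ) : ℂ) • v}
      add_mem' := fun ha hb h => by
        rw [map_add, ha h, hb h, smul_add]
      zero_mem' := fun h => by rw [map_zero, smul_zero]
      smul_mem' := fun c v hv h => by
        rw [map_smul, hv h, smul_comm] }
  have hUinv : ∀ g : J, ∀ u ∈ U, W.ρ g u ∈ U := by
    intro g u hu h
    have hmem : g⁻¹ * (h : J) * g ∈ H := by
      simpa using (‹H.Normal›.conj_mem (h : J) h.2 g⁻¹)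
    have hth : θ ⟨g⁻¹ * (h : J) * g, hmem⟩ = θ h := by
      apply hinv g⁻¹ h
      simp [mul_assoc]
    have : W.ρ (h : J) (W.ρ g u) = W.ρ g (W.ρ (g⁻¹ * (h : J) * g) u) := by
      rw [← LinearMap.comp_apply, ← LinearMap.comp_apply, ← Module.End.mul_eq_comp,
        ← Module.End.mul_eq_comp, ← map_mul, ← map_mul]
      congr 1
      group
    rw [this, show (g⁻¹ * (h : J) * g) = ((⟨g⁻¹ * (h : J) * g, hmem⟩ : H) : J) from rfl,
      hu ⟨g⁻¹ * (h : J) * g, hmem⟩, hth, map_smul]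
  rcases hs U hUinv with hbot | htop
  · exfalso
    apply hw0
    have : w ∈ U := hweig
    rw [hbot] at this
    simpa using this
  · intro h v
    have : v ∈ U := by rw [htop]; trivial
    exact this h

/-- Character values: `θ(h)·d` on `H`, zero off `H`. -/
lemma char_eq [Fintype J] (H : Subgroup J) (θ : H →* ℂˣ)
    (hab : ∀ x y : J, x * y * x⁻¹ * y⁻¹ ∈ H)
    (hnd : ∀ x : J, (∀ y : J, θ ⟨x * y * x⁻¹ * y⁻¹, hab x y⟩ = 1) → x ∈ H)
    (W : FDRep ℂ J)
    (hθ : ∀ (h : H) (v : W), W.ρ (h : J) v = ((θ h : ℂˣ) : ℂ) • v) (g : J) :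
    W.character g
      = if hg : g ∈ H then ((θ ⟨g, hg⟩ : ℂˣ) : ℂ) * (Module.finrank ℂ W) else 0 := by
  split_ifs with hg
  · have : W.ρ g = ((θ ⟨g, hg⟩ : ℂˣ) : ℂ) • (LinearMap.id : W →ₗ[ℂ] W) :=
      LinearMap.ext fun v => hθ ⟨g, hg⟩ v
    rw [FDRep.character, this, map_smul, LinearMap.trace_id, smul_eq_mul]
  · obtain ⟨y, hy⟩ : ∃ y, θ ⟨g * y * g⁻¹ * y⁻¹, hab g y⟩ ≠ 1 := by
      by_contra hc
      push_neg at hc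
      exact hg (hnd g hc)
    set c : H := ⟨y * g * y⁻¹ * g⁻¹, hab y g⟩ with hc
    have hc1 : ((θ c : ℂˣ) : ℂ) ≠ 1 := by
      intro h1
      apply hy
      have hcinv : (⟨g * y * g⁻¹ * y⁻¹, hab g y⟩ : H) = c⁻¹ := by
        ext
        show g * y * g⁻¹ * y⁻¹ = (y * g * y⁻¹ * g⁻¹)⁻¹
        group
      rw [hcinv, map_inv]
      have : θ c = 1 := Units.ext (by simpa using h1)
      rw [this, inv_one]
    have h2 : y * g * y⁻¹ = (c : J) * g := by
      rw [hc]
      group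
    have h3 : W.ρ ((c : J) * g) = ((θ c : ℂˣ) : ℂ) • (W.ρ g) := by
      rw [map_mul]
      have : W.ρ (c : J) = ((θ c : ℂˣ) : ℂ) • (LinearMap.id : W →ₗ[ℂ] W) :=
        LinearMap.ext fun v => hθ c v
      rw [this, smul_mul_assoc]
      congr 1
    have key2 : W.character (y * g * y⁻¹) = ((θ c : ℂˣ) : ℂ) * W.character g := by
      rw [h2, FDRep.character, h3, map_smul, smul_eq_mul]
      rfl
    have key : W.character g = ((θ c : ℂˣ) : ℂ) * W.character g := by
      rw [← key2, FDRep.char_conj]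
    have : (((θ c : ℂˣ) : ℂ) - 1) * W.character g = 0 := by
      rw [sub_mul, one_mul, ← key, sub_self]
    rcases mul_eq_zero.mp this with h | h
    · exact absurd (sub_eq_zero.mp h) hc1
    · exact h

/-- The character inner-product sum of two `θ`-isotypic representations. -/
lemma char_sum [Fintype J] (H : Subgroup J) (θ : H →* ℂˣ)
    (V W : FDRep ℂ J) (dV dW : ℕ)
    (hV : ∀ g : J, V.character g
      = if hg : g ∈ H then ((θ ⟨g, hg⟩ : ℂˣ) : ℂ) * dV else 0)
    (hW : ∀ g : J, W.character g
      = if hg : g ∈ H then ((θ ⟨g, hg⟩ : ℂˣ) : ℂ) * dW else 0) :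
    ∑ g : J, V.character g * W.character g⁻¹
      = ((dV : ℂ) * dW) * (Fintype.card H : ℂ) := by
  have hterm : ∀ g : J,
      V.character g * W.character g⁻¹ = if g ∈ H then ((dV : ℂ) * dW) else 0 := by
    intro g
    by_cases hg : g ∈ H
    · have hg' : g⁻¹ ∈ H := inv_mem hg
      rw [hV g, hW g⁻¹, dif_pos hg, dif_pos hg', if_pos hg]
      have hcoe : (⟨g⁻¹, hg'⟩ : H) = (⟨g, hg⟩ : H)⁻¹ := rfl
      rw [hcoe, map_inv, mul_mul_mul_comm, ← Units.val_mul, mul_inv_cancel,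
        Units.val_one, one_mul]
    · rw [hV g, dif_neg hg, if_neg hg, zero_mul]
  calc ∑ g : J, V.character g * W.character g⁻¹
      = ∑ g : J, if g ∈ H then ((dV : ℂ) * dW) else 0 :=
        Finset.sum_congr rfl (fun g _ => hterm g)
    _ = ∑ _g ∈ Finset.univ.filter (· ∈ H), ((dV : ℂ) * dW) :=
        (Finset.sum_filter _ _).symm
    _ = ((Finset.univ.filter (· ∈ H)).card : ℂ) * ((dV : ℂ) * dW) := by
        rw [Finset.sum_const, nsmul_eq_mul]
    _ = ((dV : ℂ) * dW) * (Fintype.card H : ℂ) := by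
        rw [mul_comm]
        congr 2
        exact (Fintype.card_subtype _).symm

/-- Orthogonality of characters, restated over a plain group. -/
lemma ortho [Fintype J] (V W : FDRep ℂ J) (hV : Simple V) (hW : Simple W) :
    (Fintype.card J : ℂ)⁻¹ * ∑ g : J, V.character g * W.character g⁻¹
      = if Nonempty (V ≅ W) then (1:ℂ) else 0 := by
  letI : Invertible ((Nat.card J : ℂ)) :=
    invertibleOfNonzero (Nat.cast_ne_zero.mpr Nat.card_pos.ne')
  haveI := hV
  haveI := hW
  have h := FDRep.char_orthonormal (k := ℂ) (G := J) V W
  rw [Nat.card_eq_fintype_card] at h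
  exact h

/-- Invariant subspaces of a simple module over the group algebra are trivial. -/
lemma invariant_condition (M : Type) [AddCommGroup M] [Module ℂ M]
    [Module (MonoidAlgebra ℂ J) M] [IsScalarTower ℂ (MonoidAlgebra ℂ J) M]
    [IsSimpleModule (MonoidAlgebra ℂ J) M]
    (U : Submodule ℂ M)
    (hU : ∀ g : J, ∀ u ∈ U, (MonoidAlgebra.single g (1:ℂ)) • u ∈ U) :
    U = ⊥ ∨ U = ⊤ := by
  let U' : Submodule (MonoidAlgebra ℂ J) M :=
    { carrier := (U : Set M)
      add_mem' := fun ha hb => U.add_mem ha hb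
      zero_mem' := U.zero_mem
      smul_mem' := by
        intro a v hv
        induction a using MonoidAlgebra.induction_linear with
        | zero => simpa using U.zero_mem
        | add f g hf hg =>
          rw [add_smul]
          exact U.add_mem hf hg
        | single g c =>
          have h1 : (MonoidAlgebra.single g c : MonoidAlgebra ℂ J)
              = c • MonoidAlgebra.single g (1:ℂ) := by
            rw [MonoidAlgebra.smul_single, smul_eq_mul, mul_one]
          show (MonoidAlgebra.single g c : MonoidAlgebra ℂ J) • v ∈ U
          rw [h1, smul_assoc]
          exact U.smul_mem c (hU g v hv) }
  rcases eq_bot_or_eq_top U' with h | h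
  · left
    rw [Submodule.eq_bot_iff]
    intro x hx
    have : x ∈ U' := hx
    rw [h] at this
    simpa using this
  · right
    rw [Submodule.eq_top_iff']
    intro x
    have : x ∈ U' := by rw [h]; trivial
    exact this

end GroupAlgebra

end StoneVonNeumannAux

end

/-- Stone–von Neumann / finite Heisenberg: a `J`-invariant character `θ` of a
normal subgroup `H` with abelian quotient of order `n²`, whose commutator
pairing is non-degenerate, is contained in a unique irreducible representation
`η` of `J`; moreover `dim η = n` and `η|_H` is `θ`-isotypic. -/
theorem stmt_19 {J : Type} [Group J] [Fintype J] (H : Subgroup J) [H.Normal]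
    (n : ℕ)
    (hab : ∀ x y : J, x * y * x⁻¹ * y⁻¹ ∈ H)
    (hcard : Nat.card (J ⧸ H) = n ^ 2)
    (θ : H →* ℂˣ)
    (hinv : ∀ (j : J) (h h' : H), j * (h : J) * j⁻¹ = (h' : J) → θ h' = θ h)
    (hnd : ∀ x : J, (∀ y : J, θ ⟨x * y * x⁻¹ * y⁻¹, hab x y⟩ = 1) → x ∈ H) :
    ∃ V : FDRep ℂ J,
      (∀ U : Submodule ℂ V, (∀ g : J, ∀ u ∈ U, V.ρ g u ∈ U) → U = ⊥ ∨ U = ⊤) ∧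
      (∃ v : V, v ≠ 0) ∧
      (∀ (h : H) (v : V), V.ρ (h : J) v = (θ h : ℂ) • v) ∧
      Module.finrank ℂ V = n ∧
      (∀ W : FDRep ℂ J,
        (∀ U : Submodule ℂ W, (∀ g : J, ∀ u ∈ U, W.ρ g u ∈ U) → U = ⊥ ∨ U = ⊤) →
        (∃ w : W, w ≠ 0 ∧ ∀ h : H, W.ρ (h : J) w = (θ h : ℂ) • w) →
        ∃ φ : V ≃ₗ[ℂ] W, ∀ (g : J) (v : V), φ (V.ρ g v) = W.ρ g (φ v)) := by
  classical
  open StoneVonNeumannAux in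
  haveI : NeZero ((Fintype.card J : ℂ)) := ⟨Nat.cast_ne_zero.mpr Fintype.card_ne_zero⟩
  -- the "theta idempotent" (up to a scalar)
  set e : MonoidAlgebra ℂ J := ∑ h : H, MonoidAlgebra.single (h : J) (((θ h)⁻¹ : ℂˣ) : ℂ)
    with he
  have he1 : (e : MonoidAlgebra ℂ J).coeff 1 = 1 := by
    rw [he, MonoidAlgebra.coeff_sum, Finset.sum_apply']
    rw [Finset.sum_eq_single (1 : H)]
    · simp
    · intro h _ hne
      rw [MonoidAlgebra.coeff_single_apply, if_neg]
      intro hcoe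
      exact hne (by ext; simpa using hcoe)
    · simp
  have he0 : e ≠ 0 := by
    intro h
    rw [h] at he1
    simpa using he1
  have heig : ∀ h : H,
      MonoidAlgebra.single (h : J) (1:ℂ) * e = ((θ h : ℂˣ) : ℂ) • e := by
    intro h
    rw [he, Finset.mul_sum, Finset.smul_sum]
    apply Fintype.sum_equiv (Equiv.mulLeft h)
    intro x
    rw [MonoidAlgebra.single_mul_single, one_mul, MonoidAlgebra.smul_single]
    have hcoe : ((h : J) * (x : J)) = (((Equiv.mulLeft h) x : H) : J) := rfl
    rw [hcoe]
    congr 1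
    show (((θ x)⁻¹ : ℂˣ) : ℂ) = ((θ h : ℂˣ) : ℂ) • (((θ ((Equiv.mulLeft h) x))⁻¹ : ℂˣ) : ℂ)
    have : (Equiv.mulLeft h) x = h * x := rfl
    rw [this, map_mul, smul_eq_mul, mul_inv, ← Units.val_mul, mul_inv_cancel_left]
  -- the left ideal generated by `e`, and a maximal submodule of it
  set W' : Submodule (MonoidAlgebra ℂ J) (MonoidAlgebra ℂ J) :=
    Submodule.span (MonoidAlgebra ℂ J) {e} with hW'
  have heW : e ∈ W' := Submodule.mem_span_singleton_self e
  haveI : Nontrivial ↥W' := ⟨⟨⟨e, heW⟩, 0, by simpa using he0⟩⟩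
  obtain ⟨Mx, hMx⟩ : ∃ Mx : Submodule (MonoidAlgebra ℂ J) ↥W', IsCoatom Mx :=
    IsCoatomic.exists_coatom _
  haveI hsimp : IsSimpleModule (MonoidAlgebra ℂ J) (↥W' ⧸ Mx) :=
    isSimpleModule_iff_isCoatom.mpr hMx
  haveI hfdA : Module.Finite ℂ (MonoidAlgebra ℂ J) :=
    inferInstance
  haveI : FiniteDimensional ℂ ↥W' :=
    (inferInstance : FiniteDimensional ℂ ↥(W'.restrictScalars ℂ))
  haveI : FiniteDimensional ℂ (↥W' ⧸ Mx) :=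
    Module.Finite.of_surjective ((Mx.mkQ).restrictScalars ℂ) (Submodule.mkQ_surjective Mx)
  set V : FDRep ℂ J := FDRep.of (repOfAlgModule (↥W' ⧸ Mx)) with hV
  have hVρ : ∀ (g : J) (v : ↥W' ⧸ Mx), V.ρ g v = (MonoidAlgebra.single g (1:ℂ)) • v :=
    fun g v => repOfAlgModule_apply _ g v
  -- the distinguished vector
  set v0 : ↥W' ⧸ Mx := Submodule.Quotient.mk (⟨e, heW⟩ : ↥W') with hv0
  have hv0ne : v0 ≠ 0 := by
    rw [hv0]
    intro h0
    have hmem := (Submodule.Quotient.mk_eq_zero _).mp h0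
    apply hMx.1
    rw [eq_top_iff]
    rintro ⟨w, hw⟩ -
    have hw2 := hw
    rw [hW', Submodule.mem_span_singleton] at hw2
    obtain ⟨a, ha⟩ := hw2
    have : (⟨w, hw⟩ : ↥W') = a • (⟨e, heW⟩ : ↥W') := by
      apply Subtype.ext
      show w = a • e
      rw [ha]
    rw [this]
    exact Mx.smul_mem a hmem
  -- the invariant-subspace condition for V
  have hsV : ∀ U : Submodule ℂ V, (∀ g : J, ∀ u ∈ U, V.ρ g u ∈ U) → U = ⊥ ∨ U = ⊤ := by
    intro U hU
    apply invariant_condition (J := J) (↥W' ⧸ Mx) U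
    intro g u hu
    have := hU g u hu
    rwa [hVρ g u] at this
  -- v0 is a θ-eigenvector
  have heigv0 : ∀ h : H, V.ρ (h : J) v0 = ((θ h : ℂˣ) : ℂ) • v0 := by
    intro h
    rw [hVρ, hv0]
    have h1 : (MonoidAlgebra.single (h : J) (1:ℂ)) • (⟨e, heW⟩ : ↥W')
        = ((θ h : ℂˣ) : ℂ) • (⟨e, heW⟩ : ↥W') := by
      apply Subtype.ext
      show (MonoidAlgebra.single (h : J) (1:ℂ)) * e = ((θ h : ℂˣ) : ℂ) • e
      exact heig h
    rw [← Submodule.Quotient.mk_smul, h1, Submodule.Quotient.mk_smul]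
  -- θ-isotypicity of V
  have hθV : ∀ (h : H) (v : V), V.ρ (h : J) v = ((θ h : ℂˣ) : ℂ) • v :=
    clifford H θ hinv V hsV ⟨v0, hv0ne, heigv0⟩
  have hSimpleV : Simple V := simple_of_invariant V ⟨v0, hv0ne⟩ hsV
  -- dimension count
  set d : ℕ := Module.finrank ℂ V with hd
  have hχV : ∀ g : J, V.character g
      = if hg : g ∈ H then ((θ ⟨g, hg⟩ : ℂˣ) : ℂ) * d else 0 :=
    char_eq H θ hab hnd V hθV
  have hsum : ∑ g : J, V.character g * V.character g⁻¹
      = ((d : ℂ) * d) * (Fintype.card H : ℂ) :=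
    char_sum H θ V V d d hχV hχV
  have hortho := ortho V V hSimpleV hSimpleV
  rw [if_pos ⟨Iso.refl V⟩, hsum] at hortho
  have hcardJ : (Fintype.card J : ℂ) = ((d : ℂ) * d) * (Fintype.card H : ℂ) := by
    have h2 := congrArg (fun z => (Fintype.card J : ℂ) * z) hortho
    rw [← mul_assoc, mul_inv_cancel₀ (Nat.cast_ne_zero.mpr Fintype.card_ne_zero),
      one_mul, mul_one] at h2
    exact h2.symm
  have hdn : d = n := by
    have hJ : Fintype.card J = n ^ 2 * Fintype.card H := by
      have h5 := Subgroup.card_eq_card_quotient_mul_card_subgroup (s := H)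
      rw [hcard] at h5
      rw [← Nat.card_eq_fintype_card, ← Nat.card_eq_fintype_card]
      exact h5
    have hnat : (d * d * Fintype.card H : ℕ) = (n ^ 2 * Fintype.card H : ℕ) := by
      have : ((d * d * Fintype.card H : ℕ) : ℂ) = ((n ^ 2 * Fintype.card H : ℕ) : ℂ) := by
        push_cast
        rw [← hcardJ, hJ]
        push_cast
        ring
      exact_mod_cast this
    have hdd : d * d = n ^ 2 := Nat.eq_of_mul_eq_mul_right Fintype.card_pos hnat
    have : d ^ 2 = n ^ 2 := by rw [pow_two, hdd]
    exact Nat.pow_left_injective (by norm_num) this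
  refine ⟨V, hsV, ⟨v0, hv0ne⟩, hθV, hdn ▸ rfl, ?_⟩
  -- uniqueness
  intro W hsW hwW
  have hθW : ∀ (h : H) (v : W), W.ρ (h : J) v = ((θ h : ℂˣ) : ℂ) • v :=
    clifford H θ hinv W hsW (by
      obtain ⟨w, hw0, hweig⟩ := hwW
      exact ⟨w, hw0, hweig⟩)
  obtain ⟨w, hw0, -⟩ := hwW
  have hSimpleW : Simple W := simple_of_invariant W ⟨w, hw0⟩ hsW
  haveI : Nontrivial W := nontrivial_of_ne w 0 hw0
  set dW : ℕ := Module.finrank ℂ W with hdW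
  have hdWpos : 0 < dW := Module.finrank_pos
  have hχW : ∀ g : J, W.character g
      = if hg : g ∈ H then ((θ ⟨g, hg⟩ : ℂˣ) : ℂ) * dW else 0 :=
    char_eq H θ hab hnd W hθW
  have hsum2 : ∑ g : J, V.character g * W.character g⁻¹
      = ((d : ℂ) * dW) * (Fintype.card H : ℂ) :=
    char_sum H θ V W d dW hχV hχW
  have hortho2 := ortho V W hSimpleV hSimpleW
  rw [hsum2] at hortho2
  have hne0 : (Fintype.card J : ℂ)⁻¹ * (((d : ℂ) * dW) * (Fintype.card H : ℂ)) ≠ 0 := by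
    have hd0 : d ≠ 0 := by
      intro h0
      rw [h0] at hdn
      have : Nat.card (J ⧸ H) = 0 := by rw [hcard, ← hdn]; norm_num
      simpa [Nat.card_eq_fintype_card] using this
    apply mul_ne_zero
    · exact inv_ne_zero (Nat.cast_ne_zero.mpr Fintype.card_ne_zero)
    apply mul_ne_zero
    · exact mul_ne_zero (Nat.cast_ne_zero.mpr hd0) (Nat.cast_ne_zero.mpr hdWpos.ne')
    · exact Nat.cast_ne_zero.mpr Fintype.card_ne_zero
  have hiso : Nonempty (V ≅ W) := by
    by_contra hcon
    rw [if_neg hcon] at hortho2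
    exact hne0 hortho2
  obtain ⟨i⟩ := hiso
  refine ⟨FDRep.isoToLinearEquiv i, ?_⟩
  intro g v
  have := FDRep.Iso.conj_ρ i g
  rw [this]
  rw [LinearEquiv.conj_apply]
  simp
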